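/- Let x₁,…,x_N ∈ ℝ², n ≥ 4, I ⊆ {1,…,N} with |I| = n−1, and j ∉ I. Suppose ∑_{i∈I∪{j}} |x_i − x̄^{I∪{j}}|² ≥ 2a and ∑_{i∈I} |x_i − x̄^I|² ≤ 2b with b = a/3 and a > 0 (where x̄^J denotes the barycenter over J). Then min_{k∈I} |x_k − x_j|² ≥ 2a/(2n−3). -/

import Mathlib

open Real Finset RealInnerProductSpace

set_option maxHeartbeats 1000000

/-- For n ≥ 4, I ⊆ {1,…,N} with |I| = n−1, j ∉ I, a > 0, b = a/3,
if ∑_{i∈I∪{j}} |xᵢ − x̄^{I∪{j}}|² ≥ 2a and ∑_{i∈I} |xᵢ − x̄^I|² ≤ 2b,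
then min_{k∈I} |x_k − x_j|² ≥ 2a/(2n−3). -/
theorem stmt16 (N n : ℕ) (hn : 4 ≤ n) (I : Finset (Fin N)) (hI : I.card = n - 1)
    (j : Fin N) (hj : j ∉ I) (x : Fin N → EuclideanSpace ℝ (Fin 2))
    (a b : ℝ) (ha : 0 < a) (hb : b = a / 3)
    (h1 : 2 * a ≤ ∑ i ∈ insert j I, ‖x i - (n : ℝ)⁻¹ • ∑ m ∈ insert j I, x m‖ ^ 2)
    (h2 : ∑ i ∈ I, ‖x i - ((n : ℝ) - 1)⁻¹ • ∑ m ∈ I, x m‖ ^ 2 ≤ 2 * b) :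
    ∀ k ∈ I, 2 * a / (2 * (n : ℝ) - 3) ≤ ‖x k - x j‖ ^ 2 := by
  intro k hk
  have hm : (4:ℝ) ≤ (n:ℝ) := by exact_mod_cast hn
  set m : ℝ := (n:ℝ) with hmdef
  have hm0 : m ≠ 0 := by intro h; rw [h] at hm; linarith
  have hm1 : m - 1 ≠ 0 := by intro h; nlinarith
  have hcardI : (I.card : ℝ) = m - 1 := by
    rw [hI, Nat.cast_sub (by omega)]; simp [hmdef]
  have hcardJ : ((insert j I).card : ℝ) = m := by
    rw [Finset.card_insert_of_notMem hj, hI]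
    rw [Nat.cast_add, Nat.cast_sub (by omega)]; simp [hmdef]
  set c : EuclideanSpace ℝ (Fin 2) := ((m - 1)⁻¹ : ℝ) • ∑ i ∈ I, x i with hc
  set cJ : EuclideanSpace ℝ (Fin 2) := (m⁻¹ : ℝ) • ∑ i ∈ insert j I, x i with hcJ
  set u : EuclideanSpace ℝ (Fin 2) := x j - c with hu
  set v : EuclideanSpace ℝ (Fin 2) := x k - c with hv
  -- barycenter identities
  have hsumI : ∑ i ∈ I, x i = (m - 1) • c := by
    rw [hc, smul_smul, mul_inv_cancel₀ hm1, one_smul]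
  have hsumJ : ∑ i ∈ insert j I, x i = m • cJ := by
    rw [hcJ, smul_smul, mul_inv_cancel₀ hm0, one_smul]
  have hsum0 : ∑ i ∈ I, (x i - c) = 0 := by
    rw [Finset.sum_sub_distrib, Finset.sum_const, hsumI, ← Nat.cast_smul_eq_nsmul ℝ, hcardI,
      sub_self]
  have hJ0 : ∑ i ∈ insert j I, (x i - cJ) = 0 := by
    rw [Finset.sum_sub_distrib, Finset.sum_const, hsumJ, ← Nat.cast_smul_eq_nsmul ℝ, hcardJ,
      sub_self]
  -- cJ - c = m⁻¹ • u
  have hdiff : cJ - c = (m⁻¹ : ℝ) • u := by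
    have h : m • (cJ - c) = u := by
      rw [smul_sub, ← hsumJ, Finset.sum_insert hj, hsumI, hu]
      module
    calc cJ - c = (m⁻¹ : ℝ) • (m • (cJ - c)) := by
          rw [smul_smul, inv_mul_cancel₀ hm0, one_smul]
      _ = (m⁻¹ : ℝ) • u := by rw [h]
  set U : ℝ := ‖u‖^2 with hU
  set V : ℝ := ‖v‖^2 with hV
  set P : ℝ := ⟪u, v⟫ with hP
  set SI : ℝ := ∑ i ∈ I, ‖x i - c‖^2 with hSI
  set SJ : ℝ := ∑ i ∈ insert j I, ‖x i - cJ‖^2 with hSJ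
  -- parallel axis theorem
  have key1 : ∑ i ∈ insert j I, ‖x i - c‖^2 = SJ + m * ‖cJ - c‖^2 := by
    have e : ∀ i, ‖x i - c‖^2
        = ‖x i - cJ‖^2 + 2 * ⟪x i - cJ, cJ - c⟫ + ‖cJ - c‖^2 := by
      intro i
      rw [show x i - c = (x i - cJ) + (cJ - c) by abel, norm_add_sq_real]
    calc ∑ i ∈ insert j I, ‖x i - c‖^2
        = ∑ i ∈ insert j I, (‖x i - cJ‖^2 + 2 * ⟪x i - cJ, cJ - c⟫ + ‖cJ - c‖^2) :=
          Finset.sum_congr rfl (fun i _ => e i)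
      _ = SJ + 2 * ⟪∑ i ∈ insert j I, (x i - cJ), cJ - c⟫
            + ((insert j I).card : ℝ) * ‖cJ - c‖^2 := by
          rw [Finset.sum_add_distrib, Finset.sum_add_distrib, Finset.sum_const,
            sum_inner, ← Finset.mul_sum, nsmul_eq_mul]
      _ = SJ + m * ‖cJ - c‖^2 := by
          rw [hJ0, inner_zero_left, hcardJ]; ring
  have hnormdiff : ‖cJ - c‖^2 = m⁻¹^2 * U := by
    rw [hdiff, norm_smul, mul_pow, hU, Real.norm_eq_abs, sq_abs]
  have hsplit : ∑ i ∈ insert j I, ‖x i - c‖^2 = U + SI := by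
    rw [Finset.sum_insert hj, hU, hu]
  have hA : m * SJ = m * SI + (m - 1) * U := by
    rw [hsplit, hnormdiff] at key1
    have e : m * (m * (m⁻¹^2 * U)) = U := by
      field_simp
    linear_combination (-m) * key1 - e
  -- Cauchy-Schwarz bound on V
  have hB : (m - 1) * V ≤ (m - 2) * SI := by
    set T : ℝ := ∑ i ∈ I.erase k, ‖x i - c‖^2 with hT2
    have hcardT : ((I.erase k).card : ℝ) = m - 2 := by
      rw [Finset.card_erase_of_mem hk, hI]
      rw [Nat.cast_sub (by omega : 1 ≤ n - 1), Nat.cast_sub (by omega : 1 ≤ n)]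
      push_cast
      simp [hmdef]
      ring
    have hTsum : ∑ i ∈ I.erase k, (x i - c) = -v := by
      have := Finset.add_sum_erase I (fun i => x i - c) hk
      rw [hsum0] at this
      have h2' : (x k - c) + ∑ i ∈ I.erase k, (x i - c) = 0 := this
      rw [hv]
      linear_combination (norm := abel) h2'
    have hcs : ‖v‖^2 ≤ ((I.erase k).card : ℝ) * ∑ i ∈ I.erase k, ‖x i - c‖^2 := by
      calc ‖v‖^2 = ‖∑ i ∈ I.erase k, (x i - c)‖^2 := by rw [hTsum, norm_neg]
        _ ≤ (∑ i ∈ I.erase k, ‖x i - c‖)^2 := by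
            apply pow_le_pow_left₀ (norm_nonneg _) (norm_sum_le _ _)
        _ ≤ ((I.erase k).card : ℝ) * ∑ i ∈ I.erase k, ‖x i - c‖^2 := by
            exact sq_sum_le_card_mul_sum_sq
    have hSIsplit : SI = ‖v‖^2 + ∑ i ∈ I.erase k, ‖x i - c‖^2 := by
      rw [hv]
      exact (Finset.add_sum_erase I (fun i => ‖x i - c‖^2) hk).symm
    rw [hcardT] at hcs
    rw [hV, hSIsplit]
    have h5 : (m - 2) * (‖v‖^2 + T) - (m - 1) * ‖v‖^2 = (m - 2) * T - ‖v‖^2 := by ring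
    linarith [hcs, h5]
  -- perfect square
  have hQ : 0 ≤ (m-2)^2 * U - 2*(m-2)*(2*m-3) * P + (2*m-3)^2 * V := by
    have h := sq_nonneg ‖(m-2) • u - (2*m-3) • v‖
    rw [norm_sub_sq_real, norm_smul, norm_smul, real_inner_smul_left,
      real_inner_smul_right, Real.norm_eq_abs, Real.norm_eq_abs, mul_pow, mul_pow,
      sq_abs, sq_abs] at h
    rw [hU, hV, hP]; nlinarith [h]
  have hW : ‖x k - x j‖^2 = V - 2 * P + U := by
    have : x k - x j = v - u := by rw [hv, hu]; abel
    rw [this, norm_sub_sq_real, hV, hU, hP, real_inner_comm]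
  -- final arithmetic
  rw [div_le_iff₀ (by nlinarith : (0:ℝ) < 2 * m - 3), hW]
  have hUnn : 0 ≤ U := by positivity
  have hVnn : 0 ≤ V := by positivity
  have hSInn : 0 ≤ SI := by
    rw [hSI]
    exact Finset.sum_nonneg fun i _ => pow_nonneg (norm_nonneg _) 2
  nlinarith [hQ, hA, hB, h1, h2, mul_le_mul_of_nonneg_left hB (by linarith : (0:ℝ) ≤ 2*m-3),
    mul_le_mul_of_nonneg_left h1 (by nlinarith : (0:ℝ) ≤ m * (m-2)),
    mul_le_mul_of_nonneg_left h2 (by nlinarith : (0:ℝ) ≤ 3*(m-1)*(m-2)),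
    mul_le_mul_of_nonneg_left hA.le (by linarith : (0:ℝ) ≤ m - 2)]
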